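/- Let â > 0, α̂ ∈ (0,1), β ∈ (0,1], and suppose λ_q > 0. Suppose there exists a q-partition V_0,…,V_{q−1} of G that is α-realizable for some α ∈ [0, α̂] and whose average relative outgoing weight satisfies avgrelout ∈ [β â, â/β]. Set ε = √(2q) â / (α̂ √(1−α̂²))^{1/2} and Ŭ = [u_0 ⋯ u_{q−1}]. Then εI + L is invertible and ‖Ŭ Ŭᵀ − ε (εI + L)^{−1}‖₂ / ‖Ŭ Ŭᵀ‖₂ < (1/β) √( α̂ / √(1−α̂²) ), where ‖·‖₂ is the matrix operator 2-norm. -/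

import Mathlib

open Matrix

/-- The weighted degree matrix of `A`. -/
noncomputable def degMat {n : ℕ} (A : Matrix (Fin n) (Fin n) ℝ) :
    Matrix (Fin n) (Fin n) ℝ :=
  Matrix.diagonal (fun k => ∑ l, A k l)

/-- The graph Laplacian `L = D - A`. -/
noncomputable def lap {n : ℕ} (A : Matrix (Fin n) (Fin n) ℝ) :
    Matrix (Fin n) (Fin n) ℝ :=
  degMat A - A

/-- The relative outgoing weight of the part `V j`. -/
noncomputable def relout {n q : ℕ} (A : Matrix (Fin n) (Fin n) ℝ)
    (V : Fin q → Finset (Fin n)) (j : Fin q) : ℝ :=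
  (Real.sqrt ((V j).card))⁻¹ * ∑ k ∈ V j, ∑ l ∈ (V j)ᶜ, A k l

/-- The average relative outgoing weight of a `q`-partition. -/
noncomputable def avgrelout {n q : ℕ} (A : Matrix (Fin n) (Fin n) ℝ)
    (V : Fin q → Finset (Fin n)) : ℝ :=
  Real.sqrt ((1 / (q : ℝ)) * ∑ j : Fin q, (relout A V j) ^ 2)

/-- The matrix operator 2-norm `‖M‖₂ = sup_{x≠0} ‖Mx‖₂/‖x‖₂`. -/
noncomputable def opNorm2 {n : ℕ} (M : Matrix (Fin n) (Fin n) ℝ) : ℝ :=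
  ‖Matrix.toEuclideanCLM (𝕜 := ℝ) M‖

namespace Stmt9

lemma col_orth {n : ℕ} (u : Fin n → Fin n → ℝ)
    (horth : ∀ i j : Fin n, (∑ a, u i a * u j a) = if i = j then (1:ℝ) else 0) :
    ∀ a b : Fin n, (∑ i, u i a * u i b) = if a = b then (1:ℝ) else 0 := by
  intro a b
  have h1 : (Matrix.of u) * (Matrix.of u)ᵀ = 1 := by
    ext i j
    simpa [Matrix.mul_apply, Matrix.one_apply] using horth i j
  have h2 := mul_eq_one_comm.mp h1
  have h3 := congrFun (congrFun h2 a) b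
  simpa [Matrix.mul_apply, Matrix.one_apply] using h3

lemma sum_sq_coords {ι κ : Type*} [Fintype ι] [DecidableEq ι] [Fintype κ] (w : ι → κ → ℝ)
    (horth : ∀ i j : ι, (∑ a, w i a * w j a) = if i = j then (1:ℝ) else 0)
    (d : ι → ℝ) :
    ∑ a, (∑ i, d i * w i a)^2 = ∑ i, d i ^ 2 := by
  calc ∑ a, (∑ i, d i * w i a)^2
      = ∑ a, ∑ i, ∑ j, (d i * d j) * (w i a * w j a) := by
        refine Finset.sum_congr rfl fun a _ => ?_
        rw [sq, Finset.sum_mul_sum]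
        exact Finset.sum_congr rfl fun i _ => Finset.sum_congr rfl fun j _ => by ring
    _ = ∑ i, ∑ j, (d i * d j) * ∑ a, w i a * w j a := by
        rw [Finset.sum_comm]
        refine Finset.sum_congr rfl fun i _ => ?_
        rw [Finset.sum_comm]
        exact Finset.sum_congr rfl fun j _ => by rw [Finset.mul_sum]
    _ = ∑ i, d i ^ 2 := by
        simp [horth, Finset.sum_ite_eq, sq]

lemma mulVec_decomp {n : ℕ} (u : Fin n → Fin n → ℝ) (c : Fin n → ℝ)
    (N : Matrix (Fin n) (Fin n) ℝ)
    (hN : ∀ a b, N a b = ∑ i, c i * (u i a * u i b)) (v : Fin n → ℝ) (a : Fin n) :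
    N.mulVec v a = ∑ i, (c i * ∑ b, u i b * v b) * u i a := by
  unfold Matrix.mulVec dotProduct
  calc ∑ b, N a b * v b = ∑ b, ∑ i, (c i * (u i a * u i b)) * v b := by
        refine Finset.sum_congr rfl fun b _ => ?_
        rw [hN a b, Finset.sum_mul]
    _ = ∑ i, ∑ b, (c i * (u i a * u i b)) * v b := Finset.sum_comm
    _ = ∑ i, (c i * ∑ b, u i b * v b) * u i a := by
        refine Finset.sum_congr rfl fun i _ => ?_
        rw [Finset.mul_sum, Finset.sum_mul]
        exact Finset.sum_congr rfl fun b _ => by ring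

lemma parseval {n : ℕ} (u : Fin n → Fin n → ℝ)
    (horth : ∀ i j : Fin n, (∑ a, u i a * u j a) = if i = j then (1:ℝ) else 0)
    (v : Fin n → ℝ) :
    ∑ i, (∑ b, u i b * v b)^2 = ∑ b, (v b)^2 := by
  have h := sum_sq_coords (fun (b : Fin n) (i : Fin n) => u i b)
    (fun b b' => col_orth u horth b b') v
  calc ∑ i, (∑ b, u i b * v b)^2 = ∑ i, (∑ b, v b * u i b)^2 := by
        refine Finset.sum_congr rfl fun i _ => ?_
        congr 1
        exact Finset.sum_congr rfl fun b _ => mul_comm _ _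
    _ = ∑ b, (v b)^2 := h

lemma euclid_norm_sq {n : ℕ} (x : EuclideanSpace ℝ (Fin n)) :
    ‖x‖ = Real.sqrt (∑ a, (x a)^2) := by
  rw [EuclideanSpace.norm_eq]
  congr 1
  exact Finset.sum_congr rfl fun a _ => by rw [Real.norm_eq_abs, sq_abs]

lemma toCLM_apply {n : ℕ} (N : Matrix (Fin n) (Fin n) ℝ) (x : EuclideanSpace ℝ (Fin n))
    (a : Fin n) :
    (Matrix.toEuclideanCLM (𝕜 := ℝ) N x) a = N.mulVec (fun b => x b) a := rfl

lemma opNorm2_le_of_decomp {n : ℕ} (u : Fin n → Fin n → ℝ)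
    (horth : ∀ i j : Fin n, (∑ a, u i a * u j a) = if i = j then (1:ℝ) else 0)
    (c : Fin n → ℝ) (N : Matrix (Fin n) (Fin n) ℝ)
    (hN : ∀ a b, N a b = ∑ i, c i * (u i a * u i b))
    (K : ℝ) (hK : 0 ≤ K) (hc : ∀ i, |c i| ≤ K) :
    opNorm2 N ≤ K := by
  apply ContinuousLinearMap.opNorm_le_bound _ hK
  intro x
  rw [euclid_norm_sq, euclid_norm_sq]
  have key : ∑ a, ((Matrix.toEuclideanCLM (𝕜 := ℝ) N x) a)^2 ≤ K^2 * ∑ a, (x a)^2 := by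
    have e1 : ∑ a, ((Matrix.toEuclideanCLM (𝕜 := ℝ) N x) a)^2
        = ∑ i, (c i * ∑ b, u i b * x b)^2 := by
      calc ∑ a, ((Matrix.toEuclideanCLM (𝕜 := ℝ) N x) a)^2
          = ∑ a, (∑ i, (c i * ∑ b, u i b * x b) * u i a)^2 := by
            refine Finset.sum_congr rfl fun a _ => ?_
            rw [toCLM_apply, mulVec_decomp u c N hN]
        _ = ∑ i, (c i * ∑ b, u i b * x b)^2 :=
            sum_sq_coords u horth _
    rw [e1]
    have e2 : ∑ i, (∑ b, u i b * x b)^2 = ∑ a, (x a)^2 := parseval u horth _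
    calc ∑ i, (c i * ∑ b, u i b * x b)^2
        ≤ ∑ i, K^2 * (∑ b, u i b * x b)^2 := by
          refine Finset.sum_le_sum fun i _ => ?_
          rw [mul_pow]
          have : c i ^2 ≤ K^2 := by
            rw [← sq_abs]
            exact pow_le_pow_left₀ (abs_nonneg _) (hc i) 2
          exact mul_le_mul_of_nonneg_right this (sq_nonneg _)
      _ = K^2 * ∑ a, (x a)^2 := by rw [← Finset.mul_sum, e2]
  calc Real.sqrt (∑ a, ((Matrix.toEuclideanCLM (𝕜 := ℝ) N x) a)^2)
      ≤ Real.sqrt (K^2 * ∑ a, (x a)^2) := Real.sqrt_le_sqrt key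
    _ = K * Real.sqrt (∑ a, (x a)^2) := by
        rw [Real.sqrt_mul (sq_nonneg K), Real.sqrt_sq hK]

lemma decomp_mul {n : ℕ} (u : Fin n → Fin n → ℝ)
    (horth : ∀ i j : Fin n, (∑ a, u i a * u j a) = if i = j then (1:ℝ) else 0)
    (c d : Fin n → ℝ) (N N' : Matrix (Fin n) (Fin n) ℝ)
    (hN : ∀ a b, N a b = ∑ i, c i * (u i a * u i b))
    (hN' : ∀ a b, N' a b = ∑ i, d i * (u i a * u i b)) (a b : Fin n) :
    (N * N') a b = ∑ i, (c i * d i) * (u i a * u i b) := by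
  rw [Matrix.mul_apply]
  calc ∑ k, N a k * N' k b
      = ∑ k, ∑ i, ∑ j, ((c i * u i a) * (d j * u j b)) * (u i k * u j k) := by
        refine Finset.sum_congr rfl fun k _ => ?_
        rw [hN, hN', Finset.sum_mul_sum]
        exact Finset.sum_congr rfl fun i _ => Finset.sum_congr rfl fun j _ => by ring
    _ = ∑ i, ∑ j, ((c i * u i a) * (d j * u j b)) * ∑ k, u i k * u j k := by
        rw [Finset.sum_comm]
        refine Finset.sum_congr rfl fun i _ => ?_
        rw [Finset.sum_comm]
        exact Finset.sum_congr rfl fun j _ => by rw [Finset.mul_sum]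
    _ = ∑ i, (c i * d i) * (u i a * u i b) := by
        simp only [horth, mul_ite, mul_one, mul_zero, Finset.sum_ite_eq, Finset.mem_univ,
          if_true]
        exact Finset.sum_congr rfl fun i _ => by ring

lemma decomp_one {n : ℕ} (u : Fin n → Fin n → ℝ)
    (horth : ∀ i j : Fin n, (∑ a, u i a * u j a) = if i = j then (1:ℝ) else 0) (a b : Fin n) :
    (1 : Matrix (Fin n) (Fin n) ℝ) a b = ∑ i, (1:ℝ) * (u i a * u i b) := by
  simp only [one_mul]
  rw [col_orth u horth a b, Matrix.one_apply]

lemma lap_entry {n : ℕ} (A : Matrix (Fin n) (Fin n) ℝ) (lam : Fin n → ℝ)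
    (u : Fin n → Fin n → ℝ)
    (horth : ∀ i j : Fin n, (∑ a, u i a * u j a) = if i = j then (1:ℝ) else 0)
    (heig : ∀ i : Fin n, (lap A).mulVec (u i) = lam i • u i) (a b : Fin n) :
    lap A a b = ∑ i, lam i * (u i a * u i b) := by
  have h1 : ∀ i, (∑ k, lap A a k * u i k) = lam i * u i a := by
    intro i
    have h := congrFun (heig i) a
    rw [Matrix.mulVec, dotProduct] at h
    simpa using h
  symm
  calc ∑ i, lam i * (u i a * u i b)
      = ∑ i, ∑ k, (lap A a k) * (u i k * u i b) := by
        refine Finset.sum_congr rfl fun i _ => ?_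
        rw [show lam i * (u i a * u i b) = (∑ k, lap A a k * u i k) * u i b by
          rw [h1 i]; ring, Finset.sum_mul]
        exact Finset.sum_congr rfl fun k _ => by ring
    _ = ∑ k, (lap A a k) * ∑ i, u i k * u i b := by
        rw [Finset.sum_comm]
        exact Finset.sum_congr rfl fun k _ => by rw [Finset.mul_sum]
    _ = lap A a b := by
        simp [col_orth u horth]

lemma mul_sum_sum {κ₁ κ₂ : Type*} [Fintype κ₁] [Fintype κ₂] (t : ℝ)
    (f : κ₁ → ℝ) (g : κ₂ → ℝ) :
    t * ((∑ a, f a) * (∑ b, g b)) = ∑ a, ∑ b, t * (f a * g b) := by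
  rw [Finset.sum_mul_sum, Finset.mul_sum]
  refine Finset.sum_congr rfl fun a _ => ?_
  rw [Finset.mul_sum]

lemma lam_bound {n q : ℕ} (hq1 : 1 ≤ q) (hqn : q < n)
    (A : Matrix (Fin n) (Fin n) ℝ)
    (hnonneg : ∀ k l, 0 ≤ A k l)
    (lam : Fin n → ℝ) (hmono : Monotone lam)
    (u : Fin n → Fin n → ℝ)
    (horth : ∀ i j : Fin n, (∑ a, u i a * u j a) = if i = j then (1:ℝ) else 0)
    (heig : ∀ i : Fin n, (lap A).mulVec (u i) = lam i • u i)
    (V : Fin q → Finset (Fin n))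
    (hne : ∀ j, (V j).Nonempty)
    (hdisj : ∀ j j' : Fin q, j ≠ j' → Disjoint (V j) (V j'))
    (hcover : ∀ i : Fin n, ∃ j : Fin q, i ∈ V j) :
    lam ⟨q - 1, by omega⟩ ≤ Real.sqrt (2 * ∑ j, relout A V j ^ 2) := by
  classical
  set r : Fin q → ℝ := fun j => (Real.sqrt ((V j).card))⁻¹ with hr_def
  set x : Fin q → Fin n → ℝ := fun j a => if a ∈ V j then r j else 0 with hx_def
  set out : Fin q → ℝ := fun j => ∑ k ∈ V j, ∑ l ∈ (V j)ᶜ, A k l with hout_def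
  have hcard : ∀ j, (1:ℝ) ≤ ((V j).card : ℝ) := by
    intro j; exact_mod_cast (Finset.card_pos.mpr (hne j))
  have hsq_ge : ∀ j, 1 ≤ Real.sqrt ((V j).card) := fun j => by
    rw [show (1:ℝ) = Real.sqrt 1 by simp]
    exact Real.sqrt_le_sqrt (hcard j)
  have hr_pos : ∀ j, 0 < r j := fun j => by
    have := hsq_ge j; rw [hr_def]; positivity
  have hr_le : ∀ j, r j ≤ 1 := fun j => by
    rw [hr_def]
    exact inv_le_one_of_one_le₀ (hsq_ge j)
  have hr2 : ∀ j, r j * r j = (((V j).card : ℝ))⁻¹ := by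
    intro j
    rw [hr_def, ← mul_inv]
    congr 1
    exact Real.mul_self_sqrt (by positivity)
  have hrelout : ∀ j, relout A V j = r j * out j := fun j => rfl
  have hout_nonneg : ∀ j, 0 ≤ out j := by
    intro j
    apply Finset.sum_nonneg; intro k _
    exact Finset.sum_nonneg fun l _ => hnonneg k l
  -- orthonormality of the indicator vectors
  have hxorth : ∀ j j', (∑ a, x j a * x j' a) = if j = j' then (1:ℝ) else 0 := by
    intro j j'
    by_cases h : j = j'
    · subst h
      simp only [if_pos rfl]
      have : ∀ a : Fin n, x j a * x j a = if a ∈ V j then r j * r j else 0 := by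
        intro a; by_cases ha : a ∈ V j <;> simp [hx_def, ha]
      rw [Finset.sum_congr rfl fun a _ => this a, Finset.sum_ite_mem,
        Finset.univ_inter, Finset.sum_const, hr2, nsmul_eq_mul]
      exact mul_inv_cancel₀ (ne_of_gt (lt_of_lt_of_le one_pos (hcard j)))
    · rw [if_neg h]
      apply Finset.sum_eq_zero
      intro a _
      rw [hx_def]
      by_cases ha : a ∈ V j
      · have : a ∉ V j' := fun ha' =>
          (Finset.disjoint_left.mp (hdisj j j' h) ha) ha'
        simp [ha, this]
      · simp [ha]
  -- helper for sums against indicators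
  have hind : ∀ (f : Fin n → ℝ) (j : Fin q),
      ∑ a, f a * x j a = r j * ∑ a ∈ V j, f a := by
    intro f j
    have : ∀ a : Fin n, f a * x j a = if a ∈ V j then f a * r j else 0 := by
      intro a; by_cases ha : a ∈ V j <;> simp [hx_def, ha]
    rw [Finset.sum_congr rfl fun a _ => this a, Finset.sum_ite_mem, Finset.univ_inter,
      ← Finset.sum_mul, mul_comm]
  -- kernel vector of padded coefficient matrix
  set B' : Matrix (Fin q) (Fin q) ℝ :=
    Matrix.of (fun i j => if h : (i:ℕ)+1 < q then
      ∑ a, u ⟨(i:ℕ), by omega⟩ a * x j a else 0) with hB'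
  have hdet : B'.det = 0 := by
    apply Matrix.det_eq_zero_of_row_eq_zero ⟨q-1, by omega⟩
    intro j
    rw [hB', Matrix.of_apply, dif_neg (by simp; omega)]
  obtain ⟨z, hz, hzk⟩ := Matrix.exists_mulVec_eq_zero_iff.mpr hdet
  set y : Fin n → ℝ := fun a => ∑ j, z j * x j a with hy_def
  set d : Fin n → ℝ := fun i => ∑ a, u i a * y a with hd_def
  have hya : ∀ a, y a = ∑ j, z j * x j a := fun _ => rfl
  have hdi : ∀ i, d i = ∑ a, u i a * y a := fun _ => rfl
  set C : ℝ := ∑ j, z j ^ 2 with hC_def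
  have hC : 0 < C := by
    obtain ⟨j, hj⟩ := Function.ne_iff.mp hz
    have h1 : 0 < z j ^ 2 :=
      lt_of_le_of_ne (sq_nonneg (z j)) (Ne.symm (pow_ne_zero 2 hj))
    have h2 : z j ^2 ≤ C := Finset.single_le_sum (fun i _ => sq_nonneg (z i))
      (Finset.mem_univ j)
    linarith
  have hperp : ∀ i : Fin n, (i:ℕ)+1 < q → d i = 0 := by
    intro i hi
    have hk := congrFun hzk ⟨(i:ℕ), by omega⟩
    rw [Matrix.mulVec, dotProduct] at hk
    simp only [Pi.zero_apply] at hk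
    have hB : ∀ j, B' ⟨(i:ℕ), by omega⟩ j = ∑ a, u i a * x j a := by
      intro j
      rw [hB', Matrix.of_apply, dif_pos (by simpa using hi)]
    calc d i = ∑ a, ∑ j, z j * (u i a * x j a) := by
          rw [hdi i]
          refine Finset.sum_congr rfl fun a _ => ?_
          rw [hya a, Finset.mul_sum]
          exact Finset.sum_congr rfl fun j _ => by ring
      _ = ∑ j, z j * ∑ a, u i a * x j a := by
          rw [Finset.sum_comm]
          exact Finset.sum_congr rfl fun j _ => by rw [Finset.mul_sum]
      _ = 0 := by
          rw [← hk]
          exact Finset.sum_congr rfl fun j _ => by rw [hB j]; ring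
  have hynorm : ∑ a, y a ^ 2 = C := sum_sq_coords x hxorth z
  have hd2 : ∑ i, d i ^ 2 = C := by
    calc ∑ i, d i ^ 2 = ∑ i, (∑ a, u i a * y a)^2 :=
          Finset.sum_congr rfl fun i _ => by rw [hdi i]
      _ = ∑ a, y a ^2 := parseval u horth y
      _ = C := hynorm
  -- quadratic form
  set Q : Fin q → Fin q → ℝ :=
    fun j j' => ∑ a, ∑ b, lap A a b * (x j a * x j' b) with hQ_def
  have hQjj : ∀ j j', Q j j' = ∑ a, ∑ b, lap A a b * (x j a * x j' b) :=
    fun _ _ => rfl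
  set yLy : ℝ := ∑ a, ∑ b, lap A a b * (y a * y b) with hyLy_def
  have hQF1 : yLy = ∑ i, lam i * d i ^2 := by
    rw [hyLy_def]
    calc ∑ a, ∑ b, lap A a b * (y a * y b)
        = ∑ a, ∑ b, ∑ i, lam i * ((u i a * y a) * (u i b * y b)) := by
          refine Finset.sum_congr rfl fun a _ => Finset.sum_congr rfl fun b _ => ?_
          rw [lap_entry A lam u horth heig a b, Finset.sum_mul]
          exact Finset.sum_congr rfl fun i _ => by ring
      _ = ∑ a, ∑ i, ∑ b, lam i * ((u i a * y a) * (u i b * y b)) :=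
          Finset.sum_congr rfl fun a _ => Finset.sum_comm
      _ = ∑ i, ∑ a, ∑ b, lam i * ((u i a * y a) * (u i b * y b)) :=
          Finset.sum_comm
      _ = ∑ i, lam i * d i ^2 := by
          refine Finset.sum_congr rfl fun i _ => ?_
          rw [sq, hdi i]
          exact (mul_sum_sum _ _ _).symm
  have hQF2 : yLy = ∑ j, ∑ j', (z j * z j') * Q j j' := by
    rw [hyLy_def]
    calc ∑ a, ∑ b, lap A a b * (y a * y b)
        = ∑ a, ∑ b, ∑ j, ∑ j', (z j * z j') * (lap A a b * (x j a * x j' b)) := by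
          refine Finset.sum_congr rfl fun a _ => Finset.sum_congr rfl fun b _ => ?_
          rw [hya a, hya b, mul_sum_sum]
          exact Finset.sum_congr rfl fun j _ => Finset.sum_congr rfl fun j' _ => by
            ring
      _ = ∑ a, ∑ j, ∑ b, ∑ j', (z j * z j') * (lap A a b * (x j a * x j' b)) :=
          Finset.sum_congr rfl fun a _ => Finset.sum_comm
      _ = ∑ j, ∑ a, ∑ b, ∑ j', (z j * z j') * (lap A a b * (x j a * x j' b)) :=
          Finset.sum_comm
      _ = ∑ j, ∑ a, ∑ j', ∑ b, (z j * z j') * (lap A a b * (x j a * x j' b)) :=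
          Finset.sum_congr rfl fun j _ => Finset.sum_congr rfl fun a _ =>
            Finset.sum_comm
      _ = ∑ j, ∑ j', ∑ a, ∑ b, (z j * z j') * (lap A a b * (x j a * x j' b)) :=
          Finset.sum_congr rfl fun j _ => Finset.sum_comm
      _ = ∑ j, ∑ j', (z j * z j') * Q j j' := by
          refine Finset.sum_congr rfl fun j _ => Finset.sum_congr rfl fun j' _ => ?_
          rw [hQjj j j', Finset.mul_sum]
          exact Finset.sum_congr rfl fun a _ => by rw [Finset.mul_sum]
  -- Q entries
  set w : Fin q → Fin q → ℝ := fun j j' => ∑ k ∈ V j, ∑ l ∈ V j', A k l with hw_def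
  have hw_app : ∀ j j', w j j' = ∑ k ∈ V j, ∑ l ∈ V j', A k l := fun _ _ => rfl
  have hw_nonneg : ∀ j j', 0 ≤ w j j' := by
    intro j j'
    exact Finset.sum_nonneg fun k _ => Finset.sum_nonneg fun l _ => hnonneg k l
  have hS2 : ∀ j j', (∑ a, ∑ b, A a b * (x j a * x j' b)) = r j * (r j' * w j j') := by
    intro j j'
    have step1 : ∀ a, ∑ b, A a b * (x j a * x j' b)
        = (r j' * ∑ b ∈ V j', A a b) * x j a := by
      intro a
      have h := hind (fun b => A a b) j'
      calc ∑ b, A a b * (x j a * x j' b) = ∑ b, (A a b * x j' b) * x j a := by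
            exact Finset.sum_congr rfl fun b _ => by ring
        _ = (∑ b, A a b * x j' b) * x j a := by rw [Finset.sum_mul]
        _ = (r j' * ∑ b ∈ V j', A a b) * x j a := by rw [h]
    rw [Finset.sum_congr rfl fun a _ => step1 a,
      hind (fun a => r j' * ∑ b ∈ V j', A a b) j]
    rw [hw_app]
    congr 1
    rw [Finset.mul_sum]
  have hxx : ∀ j j', j ≠ j' → ∀ a, x j a * x j' a = 0 := by
    intro j j' hjj a
    by_cases ha : a ∈ V j
    · have : a ∉ V j' := fun ha' => (Finset.disjoint_left.mp (hdisj j j' hjj) ha) ha'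
      simp [hx_def, this]
    · simp [hx_def, ha]
  have hS1 : ∀ j j', (∑ a, ∑ b, degMat A a b * (x j a * x j' b))
      = ∑ a, (∑ l, A a l) * (x j a * x j' a) := by
    intro j j'
    refine Finset.sum_congr rfl fun a _ => ?_
    rw [Finset.sum_eq_single a]
    · rw [degMat, Matrix.diagonal_apply_eq]
    · intro b _ hb
      rw [degMat, Matrix.diagonal_apply_ne _ (Ne.symm hb), zero_mul]
    · intro h; exact absurd (Finset.mem_univ a) h
  have hQsplit : ∀ j j', Q j j' = (∑ a, (∑ l, A a l) * (x j a * x j' a))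
      - r j * (r j' * w j j') := by
    intro j j'
    rw [hQjj, ← hS1 j j', ← hS2 j j', ← Finset.sum_sub_distrib]
    refine Finset.sum_congr rfl fun a _ => ?_
    rw [← Finset.sum_sub_distrib]
    refine Finset.sum_congr rfl fun b _ => ?_
    have : lap A a b = degMat A a b - A a b := rfl
    rw [this]; ring
  have hQdiag : ∀ j, Q j j = (r j * r j) * out j := by
    intro j
    rw [hQsplit j j]
    have h1 : ∀ a : Fin n, (∑ l, A a l) * (x j a * x j a)
        = if a ∈ V j then (∑ l, A a l) * (r j * r j) else 0 := by
      intro a; by_cases ha : a ∈ V j <;> simp [hx_def, ha]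
    rw [Finset.sum_congr rfl fun a _ => h1 a, Finset.sum_ite_mem, Finset.univ_inter]
    have h2 : ∑ a ∈ V j, (∑ l, A a l) * (r j * r j)
        = (w j j + out j) * (r j * r j) := by
      rw [← Finset.sum_mul]
      congr 1
      rw [hw_app, hout_def]
      rw [← Finset.sum_add_distrib]
      refine Finset.sum_congr rfl fun a _ => ?_
      exact (Finset.sum_add_sum_compl (V j) _).symm
    rw [h2]; ring
  have hQoff : ∀ j j', j ≠ j' → Q j j' = -(r j * (r j' * w j j')) := by
    intro j j' hjj
    rw [hQsplit j j']
    have : ∀ a : Fin n, (∑ l, A a l) * (x j a * x j' a) = 0 := by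
      intro a; rw [hxx j j' hjj a, mul_zero]
    rw [Finset.sum_congr rfl fun a _ => this a, Finset.sum_const_zero, zero_sub]
  -- splitting the outgoing weight over the other parts
  have hcompl : ∀ j, (V j)ᶜ = (Finset.univ.erase j).biUnion V := by
    intro j
    ext l
    simp only [Finset.mem_compl, Finset.mem_biUnion, Finset.mem_erase, Finset.mem_univ,
      true_and, and_true]
    constructor
    · intro hl
      obtain ⟨j'', hj''⟩ := hcover l
      have hne' : j'' ≠ j := by rintro rfl; exact hl hj''
      exact ⟨j'', hne', hj''⟩
    · rintro ⟨j', hj'ne, hj'⟩ hl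
      exact (Finset.disjoint_left.mp (hdisj j' j hj'ne) hj') hl
  have hout_app : ∀ j, out j = ∑ k ∈ V j, ∑ l ∈ (V j)ᶜ, A k l := fun _ => rfl
  have hsplit : ∀ j, ∑ j' ∈ Finset.univ.erase j, w j j' = out j := by
    intro j
    rw [hout_app j]
    calc ∑ j' ∈ Finset.univ.erase j, w j j'
        = ∑ j' ∈ Finset.univ.erase j, ∑ k ∈ V j, ∑ l ∈ V j', A k l :=
          Finset.sum_congr rfl fun j' _ => hw_app j j'
      _ = ∑ k ∈ V j, ∑ j' ∈ Finset.univ.erase j, ∑ l ∈ V j', A k l := Finset.sum_comm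
      _ = ∑ k ∈ V j, ∑ l ∈ (V j)ᶜ, A k l := by
          refine Finset.sum_congr rfl fun k _ => ?_
          rw [hcompl j]
          exact (Finset.sum_biUnion (fun j₁ _ j₂ _ hne => hdisj j₁ j₂ hne)).symm
  -- row sums of Q squared
  have hrow : ∀ j, ∑ j', Q j j' ^ 2 ≤ 2 * relout A V j ^ 2 := by
    intro j
    have hdiagle : Q j j ^2 ≤ relout A V j ^2 := by
      rw [hQdiag j, hrelout j]
      have h1 := hr_le j
      have h2 := (hr_pos j).le
      have hr2le : (r j)^2 ≤ 1 := by nlinarith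
      calc (r j * r j * out j)^2 = (r j)^2 * (r j * out j)^2 := by ring
        _ ≤ 1 * (r j * out j)^2 := mul_le_mul_of_nonneg_right hr2le (sq_nonneg _)
        _ = (r j * out j)^2 := one_mul _
    have hoffle : ∑ j' ∈ Finset.univ.erase j, Q j j' ^2 ≤ relout A V j ^2 := by
      have step1 : ∑ j' ∈ Finset.univ.erase j, Q j j' ^2
          ≤ ∑ j' ∈ Finset.univ.erase j, (r j)^2 * w j j' ^2 := by
        refine Finset.sum_le_sum fun j' hj' => ?_
        have hjj : j ≠ j' := fun he => (Finset.mem_erase.mp hj').1 (he.symm)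
        rw [hQoff j j' hjj, neg_sq]
        have h1 := hr_le j'
        have h2 := (hr_pos j').le
        have hr2le : (r j')^2 ≤ 1 := by nlinarith
        calc (r j * (r j' * w j j'))^2 = (r j)^2 * ((r j')^2 * (w j j')^2) := by ring
          _ ≤ (r j)^2 * (1 * (w j j')^2) :=
              mul_le_mul_of_nonneg_left
                (mul_le_mul_of_nonneg_right hr2le (sq_nonneg _)) (sq_nonneg _)
          _ = (r j)^2 * (w j j')^2 := by ring
      have step2 : ∑ j' ∈ Finset.univ.erase j, (r j)^2 * w j j' ^2
          = (r j)^2 * ∑ j' ∈ Finset.univ.erase j, w j j' ^2 := by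
        rw [Finset.mul_sum]
      have step3 : ∑ j' ∈ Finset.univ.erase j, w j j' ^2 ≤ out j ^2 := by
        rw [← hsplit j]
        exact Finset.sum_sq_le_sq_sum_of_nonneg fun j' _ => hw_nonneg j j'
      calc ∑ j' ∈ Finset.univ.erase j, Q j j' ^2
          ≤ (r j)^2 * ∑ j' ∈ Finset.univ.erase j, w j j' ^2 := by
            rw [← step2]; exact step1
        _ ≤ (r j)^2 * out j ^2 :=
            mul_le_mul_of_nonneg_left step3 (sq_nonneg _)
        _ = relout A V j ^2 := by rw [hrelout j, mul_pow]
    calc ∑ j', Q j j' ^2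
        = Q j j ^2 + ∑ j' ∈ Finset.univ.erase j, Q j j' ^2 :=
          (Finset.add_sum_erase _ _ (Finset.mem_univ j)).symm
      _ ≤ relout A V j ^2 + relout A V j ^2 := add_le_add hdiagle hoffle
      _ = 2 * relout A V j ^2 := by ring
  have hT : ∑ j, ∑ j', Q j j' ^2 ≤ 2 * ∑ j, relout A V j ^2 := by
    rw [Finset.mul_sum]
    exact Finset.sum_le_sum fun j _ => hrow j
  -- Cauchy-Schwarz
  set T : ℝ := ∑ j, ∑ j', Q j j' ^2 with hT_def
  have hT0 : 0 ≤ T := by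
    rw [hT_def]
    exact Finset.sum_nonneg fun j _ => Finset.sum_nonneg fun j' _ => sq_nonneg _
  have hup : yLy ≤ Real.sqrt T * C := by
    set f : Fin q × Fin q → ℝ := fun p => z p.1 * z p.2 with hf
    set g : Fin q × Fin q → ℝ := fun p => Q p.1 p.2 with hg
    have h1 : yLy = ∑ p : Fin q × Fin q, f p * g p := by
      rw [hQF2, Fintype.sum_prod_type]
    have h2 : ∑ p : Fin q × Fin q, f p ^2 = C^2 := by
      rw [Fintype.sum_prod_type]
      calc ∑ j, ∑ j', (z j * z j')^2 = ∑ j, z j ^2 * ∑ j', z j' ^2 := by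
            refine Finset.sum_congr rfl fun j _ => ?_
            rw [Finset.mul_sum]
            exact Finset.sum_congr rfl fun j' _ => by ring
        _ = C^2 := by rw [← Finset.sum_mul, sq]
    have h3 : ∑ p : Fin q × Fin q, g p ^2 = T := by
      rw [Fintype.sum_prod_type]
    have key := Finset.sum_mul_sq_le_sq_mul_sq Finset.univ f g
    calc yLy = ∑ p : Fin q × Fin q, f p * g p := h1
      _ ≤ |∑ p : Fin q × Fin q, f p * g p| := le_abs_self _
      _ = Real.sqrt ((∑ p : Fin q × Fin q, f p * g p)^2) := (Real.sqrt_sq_eq_abs _).symm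
      _ ≤ Real.sqrt (C^2 * T) := Real.sqrt_le_sqrt (by rw [← h2, ← h3]; exact key)
      _ = Real.sqrt T * C := by
          rw [Real.sqrt_mul (sq_nonneg C), Real.sqrt_sq hC.le, mul_comm]
  -- lower bound
  have hlow : lam ⟨q - 1, by omega⟩ * C ≤ yLy := by
    rw [hQF1, ← hd2, Finset.mul_sum]
    refine Finset.sum_le_sum fun i _ => ?_
    by_cases hi : (i:ℕ)+1 < q
    · rw [hperp i hi]
      simp
    · refine mul_le_mul_of_nonneg_right (hmono ?_) (sq_nonneg _)
      rw [Fin.le_def]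
      simp only
      omega
  have hfin : lam ⟨q - 1, by omega⟩ * C
      ≤ Real.sqrt (2 * ∑ j, relout A V j ^ 2) * C := by
    refine hlow.trans (hup.trans ?_)
    exact mul_le_mul_of_nonneg_right (Real.sqrt_le_sqrt hT) hC.le
  exact le_of_mul_le_mul_right hfin hC

end Stmt9

set_option maxHeartbeats 1000000 in
open Stmt9 in
/-- approximation for mode-independent computation. -/
theorem stmt_9 (n q : ℕ) (hq1 : 1 ≤ q) (hqn : q < n)
    (A : Matrix (Fin n) (Fin n) ℝ)
    (hsymm : ∀ k l, A k l = A l k)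
    (hnonneg : ∀ k l, 0 ≤ A k l)
    (hdiag : ∀ k, A k k = 0)
    (lam : Fin n → ℝ)
    (hmono : Monotone lam)
    (hlam0 : lam ⟨0, Nat.lt_of_le_of_lt (Nat.zero_le q) hqn⟩ = 0)
    (u : Fin n → Fin n → ℝ)
    (horth : ∀ i j : Fin n, (∑ a, u i a * u j a) = if i = j then (1 : ℝ) else 0)
    (heig : ∀ i : Fin n, (lap A).mulVec (u i) = lam i • u i)
    (hlamq : 0 < lam ⟨q, hqn⟩)
    (ahat αhat β : ℝ)
    (hahat : 0 < ahat) (hαhat0 : 0 < αhat) (hαhat1 : αhat < 1)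
    (hβ0 : 0 < β) (hβ1 : β ≤ 1)
    -- there is a q-partition that is α-realizable for some α ∈ [0, α̂]
    -- and whose average relative outgoing weight lies in [β â, â/β]
    (hexists : ∃ V : Fin q → Finset (Fin n),
      (∀ j, (V j).Nonempty) ∧
      (∀ j j' : Fin q, j ≠ j' → Disjoint (V j) (V j')) ∧
      (∀ i : Fin n, ∃ j : Fin q, i ∈ V j) ∧
      (∃ α : ℝ, 0 ≤ α ∧ α ≤ αhat ∧
        avgrelout A V ≤ α * lam ⟨q, hqn⟩ / Real.sqrt (2 * q)) ∧
      β * ahat ≤ avgrelout A V ∧ avgrelout A V ≤ ahat / β)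
    (ε : ℝ)
    (hε : ε = Real.sqrt (2 * q) * ahat / Real.sqrt (αhat * Real.sqrt (1 - αhat ^ 2)))
    -- M = Ŭ Ŭᵀ where Ŭ = [u_0 ⋯ u_{q-1}]
    (M : Matrix (Fin n) (Fin n) ℝ)
    (hM : ∀ a b, M a b = ∑ l ∈ Finset.univ.filter (fun l : Fin n => (l : ℕ) < q),
      u l a * u l b) :
    IsUnit (ε • (1 : Matrix (Fin n) (Fin n) ℝ) + lap A) ∧
    opNorm2 (M - ε • (ε • (1 : Matrix (Fin n) (Fin n) ℝ) + lap A)⁻¹) / opNorm2 M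
      < (1 / β) * Real.sqrt (αhat / Real.sqrt (1 - αhat ^ 2)) := by
  classical
  obtain ⟨V, hne, hdisj, hcover, ⟨α, hα0, hααhat, hreal⟩, hlowa, huppa⟩ := hexists
  -- abbreviations
  set s : ℝ := Real.sqrt (1 - αhat ^ 2) with hs_def
  set t : ℝ := Real.sqrt (αhat * s) with ht_def
  set S2q : ℝ := Real.sqrt (2 * q) with hS2q_def
  set RHS : ℝ := (1 / β) * Real.sqrt (αhat / s) with hRHS_def
  have hs0 : 0 < s := Real.sqrt_pos.mpr (by nlinarith)
  have hs1 : s < 1 := by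
    have hsq : s^2 = 1 - αhat^2 := Real.sq_sqrt (by nlinarith)
    nlinarith
  have ht0 : 0 < t := Real.sqrt_pos.mpr (by positivity)
  have hq0 : (0:ℝ) < (q:ℝ) := by exact_mod_cast hq1
  have hS2q0 : 0 < S2q := Real.sqrt_pos.mpr (by positivity)
  have hε0 : 0 < ε := by rw [hε]; positivity
  have hRHSpos : 0 < RHS := by
    rw [hRHS_def]
    have h : 0 < Real.sqrt (αhat / s) := Real.sqrt_pos.mpr (by positivity)
    positivity
  have haa0 : 0 < avgrelout A V := lt_of_lt_of_le (by positivity) hlowa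
  -- the key eigenvalue bounds
  set m : ℝ := S2q * (β * ahat) / αhat with hm_def
  have hm0 : 0 < m := by rw [hm_def]; positivity
  have hm_le : m ≤ lam ⟨q, hqn⟩ := by
    have h1 : β * ahat ≤ α * lam ⟨q, hqn⟩ / S2q := le_trans hlowa hreal
    have h2 : α * lam ⟨q, hqn⟩ ≤ αhat * lam ⟨q, hqn⟩ :=
      mul_le_mul_of_nonneg_right hααhat hlamq.le
    have h3 : β * ahat ≤ αhat * lam ⟨q, hqn⟩ / S2q :=
      h1.trans ((div_le_div_iff_of_pos_right hS2q0).mpr h2)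
    rw [hm_def, div_le_iff₀ hαhat0]
    rw [le_div_iff₀ hS2q0] at h3
    nlinarith
  have hlam' : lam ⟨q - 1, by omega⟩ ≤ S2q * (ahat / β) := by
    have h1 := lam_bound hq1 hqn A hnonneg lam hmono u horth heig V hne hdisj hcover
    have h3 : (avgrelout A V)^2 = (1/(q:ℝ)) * ∑ j, relout A V j ^2 := by
      rw [avgrelout]
      exact Real.sq_sqrt (by positivity)
    have h2 : ∑ j, relout A V j ^ 2 = (q:ℝ) * (avgrelout A V)^2 := by
      rw [h3]
      field_simp
    have h4 : Real.sqrt (2 * ∑ j, relout A V j ^ 2) = S2q * avgrelout A V := by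
      rw [h2, show (2:ℝ) * ((q:ℝ) * (avgrelout A V)^2)
          = (2*(q:ℝ)) * (avgrelout A V)^2 by ring,
        Real.sqrt_mul (by positivity), Real.sqrt_sq haa0.le, hS2q_def]
    rw [h4] at h1
    refine h1.trans ?_
    have h5 : avgrelout A V ≤ ahat / β := huppa
    exact mul_le_mul_of_nonneg_left h5 hS2q0.le
  have hlam_nonneg : ∀ i, 0 ≤ lam i := by
    intro i
    have h := hmono (show (⟨0, Nat.lt_of_le_of_lt (Nat.zero_le q) hqn⟩ : Fin n) ≤ i by
      rw [Fin.le_def]; exact Nat.zero_le _)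
    rwa [hlam0] at h
  have hden : ∀ i, 0 < ε + lam i := fun i => by have := hlam_nonneg i; linarith
  -- the resolvent matrix
  set E : Matrix (Fin n) (Fin n) ℝ := ε • (1 : Matrix (Fin n) (Fin n) ℝ) + lap A
    with hE_def
  set B : Matrix (Fin n) (Fin n) ℝ :=
    Matrix.of (fun a b => ∑ i, (ε + lam i)⁻¹ * (u i a * u i b)) with hB_def
  have hBentry : ∀ a b, B a b = ∑ i, (ε + lam i)⁻¹ * (u i a * u i b) := fun _ _ => rfl
  have hEentry : ∀ a b, E a b = ∑ i, (ε + lam i) * (u i a * u i b) := by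
    intro a b
    have h1 : E a b = ε * (1 : Matrix (Fin n) (Fin n) ℝ) a b + lap A a b := by
      rw [hE_def, Matrix.add_apply, Matrix.smul_apply, smul_eq_mul]
    rw [h1, decomp_one u horth a b, lap_entry A lam u horth heig a b, Finset.mul_sum,
      ← Finset.sum_add_distrib]
    exact Finset.sum_congr rfl fun i _ => by ring
  have hEB : E * B = 1 := by
    ext a b
    rw [decomp_mul u horth _ _ E B hEentry hBentry a b, decomp_one u horth a b]
    exact Finset.sum_congr rfl fun i _ => by rw [mul_inv_cancel₀ (hden i).ne']
  have hBE : B * E = 1 := mul_eq_one_comm.mp hEB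
  have hUnit : IsUnit E := ⟨⟨E, B, hEB, hBE⟩, rfl⟩
  have hInv : E⁻¹ = B := Matrix.inv_eq_right_inv hEB
  -- the error matrix and its eigencoefficients
  set c : Fin n → ℝ :=
    fun i => (if (i:ℕ) < q then (1:ℝ) else 0) - ε * (ε + lam i)⁻¹ with hc_def
  have hcapp : ∀ i, c i = (if (i:ℕ) < q then (1:ℝ) else 0) - ε * (ε + lam i)⁻¹ :=
    fun _ => rfl
  have hMdecomp : ∀ a b, M a b
      = ∑ i : Fin n, (if (i:ℕ) < q then (1:ℝ) else 0) * (u i a * u i b) := by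
    intro a b
    rw [hM a b, Finset.sum_filter]
    exact Finset.sum_congr rfl fun i _ => by split <;> simp
  have hNentry : ∀ a b, (M - ε • B) a b = ∑ i, c i * (u i a * u i b) := by
    intro a b
    rw [Matrix.sub_apply, Matrix.smul_apply, smul_eq_mul, hMdecomp a b, hBentry a b,
      Finset.mul_sum, ← Finset.sum_sub_distrib]
    exact Finset.sum_congr rfl fun i _ => by rw [hcapp i]; ring
  -- the operator norm of M is 1
  have hMup : opNorm2 M ≤ 1 := by
    refine opNorm2_le_of_decomp u horth (fun i => if (i:ℕ) < q then (1:ℝ) else 0) M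
      hMdecomp 1 zero_le_one ?_
    intro i
    by_cases hi : (i:ℕ) < q <;> simp [hi]
  have hMlow : 1 ≤ opNorm2 M := by
    set i0 : Fin n := ⟨0, Nat.lt_of_le_of_lt (Nat.zero_le q) hqn⟩ with hi0
    set x0 : EuclideanSpace ℝ (Fin n) := (WithLp.equiv 2 (Fin n → ℝ)).symm (u i0)
      with hx0
    have hx0a : ∀ a, x0 a = u i0 a := fun _ => rfl
    have horthi0 : (∑ a, u i0 a * u i0 a) = 1 := by
      have h := horth i0 i0
      rwa [if_pos rfl] at h
    have hnx0 : ‖x0‖ = 1 := by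
      rw [euclid_norm_sq]
      have h : ∑ a, (x0 a)^2 = 1 := by
        rw [← horthi0]
        exact Finset.sum_congr rfl fun a _ => by rw [hx0a a, sq]
      rw [h, Real.sqrt_one]
    have hTx0 : ∀ a, (Matrix.toEuclideanCLM (𝕜 := ℝ) M x0) a = u i0 a := by
      intro a
      rw [toCLM_apply,
        mulVec_decomp u (fun i => if (i:ℕ) < q then (1:ℝ) else 0) M hMdecomp]
      have hxb : ∀ i, (∑ b, u i b * x0 b) = if i = i0 then (1:ℝ) else 0 := by
        intro i
        rw [← horth i i0]
        exact Finset.sum_congr rfl fun b _ => by rw [hx0a b]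
      calc ∑ i : Fin n, ((if (i:ℕ) < q then (1:ℝ) else 0) * ∑ b, u i b * x0 b) * u i a
          = ∑ i : Fin n, (if i = i0 then ((if (i:ℕ) < q then (1:ℝ) else 0) * u i a) else 0) := by
            refine Finset.sum_congr rfl fun i _ => ?_
            rw [hxb i]
            split <;> simp
        _ = (if (i0:ℕ) < q then (1:ℝ) else 0) * u i0 a := by
            rw [Finset.sum_ite_eq' Finset.univ i0
              (fun i => (if (i:ℕ) < q then (1:ℝ) else 0) * u i a)]
            rw [if_pos (Finset.mem_univ i0)]
        _ = u i0 a := by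
            rw [if_pos (show ((i0 : Fin n) : ℕ) < q from hq1), one_mul]
    have hTnorm : ‖Matrix.toEuclideanCLM (𝕜 := ℝ) M x0‖ = 1 := by
      rw [euclid_norm_sq]
      have h : ∑ a, ((Matrix.toEuclideanCLM (𝕜 := ℝ) M x0) a)^2 = 1 := by
        rw [← horthi0]
        exact Finset.sum_congr rfl fun a _ => by rw [hTx0 a, sq]
      rw [h, Real.sqrt_one]
    have h := ContinuousLinearMap.le_opNorm (Matrix.toEuclideanCLM (𝕜 := ℝ) M) x0
    rw [hTnorm, hnx0, mul_one] at h
    exact h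
  have hMnorm : opNorm2 M = 1 := le_antisymm hMup hMlow
  -- numeric facts
  have hεt : ε = S2q * ahat / t := hε
  have hK1eq : (S2q * (ahat / β)) / ε = t / β := by
    rw [hεt]
    rw [div_eq_div_iff (by positivity) hβ0.ne']
    field_simp
  have hsqrt_as : Real.sqrt (αhat / s) * t = αhat := by
    rw [ht_def, ← Real.sqrt_mul (by positivity)]
    rw [show αhat / s * (αhat * s) = αhat^2 by field_simp]
    exact Real.sqrt_sq hαhat0.le
  have hεRm : ε = RHS * m := by
    have h2 : Real.sqrt (αhat / s) = αhat / t := by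
      rw [eq_div_iff ht0.ne']
      exact hsqrt_as
    rw [hεt, hRHS_def, h2, hm_def]
    field_simp
  have hK1R : t / β < RHS := by
    rw [hRHS_def]
    have h1 : t < Real.sqrt (αhat / s) := by
      rw [ht_def]
      apply Real.sqrt_lt_sqrt (by positivity)
      rw [lt_div_iff₀ hs0]
      have hss : s * s < 1 := by
        nlinarith [mul_pos (sub_pos.mpr hs1) (show (0:ℝ) < 1 + s by linarith)]
      nlinarith [mul_lt_mul_of_pos_left hss hαhat0]
    calc t / β < Real.sqrt (αhat / s) / β := (div_lt_div_iff_of_pos_right hβ0).mpr h1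
      _ = (1/β) * Real.sqrt (αhat / s) := by ring
  have hK2R : ε / (ε + m) < RHS := by
    rw [div_lt_iff₀ (by linarith)]
    calc ε = RHS * m := hεRm
      _ < RHS * (ε + m) := by
          have h : m < ε + m := by linarith
          exact mul_lt_mul_of_pos_left h hRHSpos
  -- the coefficient bound
  set K : ℝ := max (t / β) (ε / (ε + m)) with hK_def
  have hK0 : 0 ≤ K := le_trans (by positivity) (le_max_left (t/β) (ε/(ε+m)))
  have hcK : ∀ i, |c i| ≤ K := by
    intro i
    by_cases hi : (i:ℕ) < q
    · have hci : c i = lam i / (ε + lam i) := by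
        rw [hcapp i, if_pos hi]
        have hd : (ε + lam i) ≠ 0 := (hden i).ne'
        field_simp
        ring
      rw [hci, abs_of_nonneg (div_nonneg (hlam_nonneg i) (hden i).le)]
      have hle : lam i ≤ lam ⟨q - 1, by omega⟩ := by
        apply hmono
        rw [Fin.le_def]
        simp only
        omega
      have h1 : lam i / (ε + lam i) ≤ lam ⟨q - 1, by omega⟩ / ε :=
        div_le_div₀ (hlam_nonneg _) hle hε0 (by linarith [hlam_nonneg i])
      calc lam i / (ε + lam i) ≤ lam ⟨q - 1, by omega⟩ / ε := h1
        _ ≤ (S2q * (ahat / β)) / ε := (div_le_div_iff_of_pos_right hε0).mpr hlam'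
        _ = t / β := hK1eq
        _ ≤ K := le_max_left _ _
    · have hci : c i = -(ε / (ε + lam i)) := by
        rw [hcapp i, if_neg hi, zero_sub, div_eq_mul_inv]
      rw [hci, abs_neg, abs_of_nonneg (div_nonneg hε0.le (hden i).le)]
      have hqi : lam ⟨q, hqn⟩ ≤ lam i := by
        apply hmono
        rw [Fin.le_def]
        simp only
        omega
      calc ε / (ε + lam i) ≤ ε / (ε + m) := by
            apply div_le_div_of_nonneg_left hε0.le (by linarith) (by linarith)
        _ ≤ K := le_max_right _ _
  have hNle : opNorm2 (M - ε • B) ≤ K :=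
    opNorm2_le_of_decomp u horth c (M - ε • B) hNentry K hK0 hcK
  have hKR : K < RHS := max_lt hK1R hK2R
  refine ⟨hUnit, ?_⟩
  rw [hInv, hMnorm, div_one]
  exact lt_of_le_of_lt hNle hKR
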